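/- Let R be a ring and a, b ∈ R with 1 - ab ∈ √Δ(R). Then 1 - ba ∈ √Δ(R) if and only if a is a unit of R. -/
import Mathlib


/-- Δ(R) = {x : 1 - x*u is a unit for every unit u}. -/
def Delta (R : Type*) [Ring R] : Set R :=
  {x | ∀ u : R, IsUnit u → IsUnit (1 - x * u)}

/-- √Δ(R) = {x : x^n ∈ Δ(R) for some n ≥ 1}. -/
def sqrtDelta (R : Type*) [Ring R] : Set R :=
  {x | ∃ n : ℕ, 1 ≤ n ∧ x ^ n ∈ Delta R}

private theorem isUnit_of_left_right {R : Type*} [Ring R] {a x y : R}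
    (hx : x * a = 1) (hy : a * y = 1) : IsUnit a := by
  have hxy : x = y := by
    calc x = x * (a * y) := by rw [hy, mul_one]
    _ = (x * a) * y := by rw [mul_assoc]
    _ = y := by rw [hx, one_mul]
  exact isUnit_iff_exists.mpr ⟨y, hy, hxy ▸ hx⟩

private theorem sqrtDelta_one_sub_unit {R : Type*} [Ring R] {c : R}
    (h : c ∈ sqrtDelta R) : IsUnit (1 - c) := by
  obtain ⟨n, hn, hd⟩ := h
  have h1 : IsUnit (1 - c ^ n) := by simpa using hd 1 isUnit_one
  obtain ⟨v, hv⟩ := h1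
  set s : R := ∑ i ∈ Finset.range n, c ^ i with hs
  have hl : (1 - c) * s = 1 - c ^ n := by
    have := geom_sum_mul c n
    have hcomm : (1 - c) * s = s * (1 - c) := by
      simp [hs, Finset.mul_sum, Finset.sum_mul, mul_sub, sub_mul, ← pow_succ, ← pow_succ']
    rw [hcomm]
    have : s * (c - 1) = c ^ n - 1 := geom_sum_mul c n
    calc s * (1 - c) = -(s * (c - 1)) := by noncomm_ring
    _ = 1 - c ^ n := by rw [this]; noncomm_ring
  have hr : s * (1 - c) = 1 - c ^ n := by
    have : s * (c - 1) = c ^ n - 1 := geom_sum_mul c n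
    calc s * (1 - c) = -(s * (c - 1)) := by noncomm_ring
    _ = 1 - c ^ n := by rw [this]; noncomm_ring
  have hv1 : (1 - c ^ n) * ↑v⁻¹ = 1 := by rw [← hv]; exact v.mul_inv
  have hv2 : ↑v⁻¹ * (1 - c ^ n) = 1 := by rw [← hv]; exact v.inv_mul
  refine isUnit_of_left_right (x := ↑v⁻¹ * s) (y := s * ↑v⁻¹) ?_ ?_
  · rw [mul_assoc, hr, hv2]
  · rw [← mul_assoc, hl, hv1]

private theorem sqrtDelta_conj {R : Type*} [Ring R] (u : Rˣ) {x : R}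
    (hx : x ∈ sqrtDelta R) : (↑u⁻¹ * x * ↑u) ∈ sqrtDelta R := by
  obtain ⟨n, hn, hd⟩ := hx
  refine ⟨n, hn, ?_⟩
  have hpow : ∀ m : ℕ, (↑u⁻¹ * x * ↑u) ^ m = ↑u⁻¹ * x ^ m * ↑u := by
    intro m
    induction m with
    | zero => simp
    | succ k ih =>
      rw [pow_succ, ih, pow_succ]
      simp [mul_assoc]
  intro v hv
  rw [hpow n]
  have hconj : IsUnit ((↑u : R) * v * ↑u⁻¹) :=
    (u.isUnit.mul hv).mul u⁻¹.isUnit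
  have := hd _ hconj
  have key : ↑u⁻¹ * (1 - x ^ n * (↑u * v * ↑u⁻¹)) * ↑u = 1 - ↑u⁻¹ * x ^ n * ↑u * v := by
    simp [mul_sub, sub_mul, mul_assoc]
  have : IsUnit (↑u⁻¹ * (1 - x ^ n * (↑u * v * ↑u⁻¹)) * ↑u) :=
    (u⁻¹.isUnit.mul this).mul u.isUnit
  rwa [key] at this

theorem stmt_11 {R : Type*} [Ring R] (a b : R) (h : 1 - a * b ∈ sqrtDelta R) :
    1 - b * a ∈ sqrtDelta R ↔ IsUnit a := by
  constructor
  · intro hba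
    have hab : IsUnit (a * b) := by
      have := sqrtDelta_one_sub_unit h
      simpa using this
    have hba' : IsUnit (b * a) := by
      have := sqrtDelta_one_sub_unit hba
      simpa using this
    obtain ⟨v, hv⟩ := hab
    obtain ⟨w, hw⟩ := hba'
    refine isUnit_of_left_right (x := ↑w⁻¹ * b) (y := b * ↑v⁻¹) ?_ ?_
    · rw [mul_assoc, ← hw, w.inv_mul]
    · rw [← mul_assoc, ← hv, v.mul_inv]
  · intro ha
    obtain ⟨u, hu⟩ := ha
    have := sqrtDelta_conj u h
    have key : ↑u⁻¹ * (1 - a * b) * ↑u = 1 - b * a := by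
      rw [← hu]
      simp [mul_sub, sub_mul, mul_assoc]
    rwa [key] at this
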